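/- Let n ≥ 2, let J = [r, s] ⊆ {1,…,n−1} be an interval, and let k ∈ J with k−1 ∈ J. Then the collections S_{J,k,□} and S_{J,k−1,□} are flip equivalent: S_{J,k−1,□} is obtained from S_{J,k,□} by a finite sequence of weak lowering flips, each intermediate collection being weakly separated. Consequently, all the collections S_{J,l,□} with l ∈ J are pairwise flip equivalent. -/
import Mathlib


/-- `allLt A B` means every element of `A` is smaller than every element of `B`
(vacuously true if `A` or `B` is empty). -/
def allLt (A B : Finset ℕ) : Prop := ∀ a ∈ A, ∀ b ∈ B, a < b

/-- Leclerc–Zelevinsky weak separation of two finite sets of integers. -/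
def WeaklySeparated (I J : Finset ℕ) : Prop :=
  (J.card ≤ I.card ∧ ∃ J' J'' : Finset ℕ, Disjoint J' J'' ∧ J' ∪ J'' = J \ I ∧
      allLt J' (I \ J) ∧ allLt (I \ J) J'') ∨
  (I.card ≤ J.card ∧ ∃ I' I'' : Finset ℕ, Disjoint I' I'' ∧ I' ∪ I'' = I \ J ∧
      allLt I' (J \ I) ∧ allLt (J \ I) I'')

/-- A collection of subsets is weakly separated if its members are pairwise weakly separated. -/
def WSColl (S : Set (Finset ℕ)) : Prop := ∀ I ∈ S, ∀ J ∈ S, WeaklySeparated I J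

/-- An interval subset of `[n] = {1,…,n}`, i.e. one of the form `{a, a+1, …, b}`. -/
def IsIntervalSet (n : ℕ) (I : Finset ℕ) : Prop :=
  I ⊆ Finset.Icc 1 n ∧ ∃ a b : ℕ, I = Finset.Icc a b

/-- A cointerval subset of `[n]`: its complement in `[n]` is an interval. -/
def IsCointervalSet (n : ℕ) (I : Finset ℕ) : Prop :=
  I ⊆ Finset.Icc 1 n ∧ ∃ a b : ℕ, Finset.Icc 1 n \ I = Finset.Icc a b

/-- The rectangle collection `S_{k,□}`: all interval `k`-subsets of `[n]` together with
all `k`-subsets of `[n]` that contain `1` and are a disjoint union of two intervals. -/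
def Srect (n k : ℕ) : Set (Finset ℕ) :=
  {I | I ⊆ Finset.Icc 1 n ∧ I.card = k ∧
    ((∃ a b : ℕ, I = Finset.Icc a b) ∨
     (1 ∈ I ∧ ∃ A B : Finset ℕ, (∃ a b : ℕ, A = Finset.Icc a b) ∧
        (∃ c d : ℕ, B = Finset.Icc c d) ∧ Disjoint A B ∧ I = A ∪ B))}

/-- The extended rectangle collection `S_{J,k,□}`: `S_{k,□}` together with all interval
`t`-subsets for `t ∈ J`, `t > k`, and all cointerval `t`-subsets for `t ∈ J`, `t < k`. -/
def SJrect (n : ℕ) (J : Finset ℕ) (k : ℕ) : Set (Finset ℕ) :=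
  Srect n k ∪ {I | IsIntervalSet n I ∧ I.card ∈ J ∧ k < I.card}
    ∪ {I | IsCointervalSet n I ∧ I.card ∈ J ∧ I.card < k}

/-- A weak raising flip: for `L ⊆ [n]` and `i < j < k` in `[n] \ L`, if `S` contains `Lj`
and its witnesses `Li`, `Lk`, `Lij`, `Ljk`, replace `Lj` by `Lik`. -/
def RaisingFlip (n : ℕ) (S S' : Set (Finset ℕ)) : Prop :=
  ∃ (L : Finset ℕ) (i j k : ℕ), L ⊆ Finset.Icc 1 n ∧
    i ∈ Finset.Icc 1 n ∧ j ∈ Finset.Icc 1 n ∧ k ∈ Finset.Icc 1 n ∧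
    i ∉ L ∧ j ∉ L ∧ k ∉ L ∧ i < j ∧ j < k ∧
    L ∪ {j} ∈ S ∧ L ∪ {i} ∈ S ∧ L ∪ {k} ∈ S ∧ L ∪ {i, j} ∈ S ∧ L ∪ {j, k} ∈ S ∧
    S' = (S \ {L ∪ {j}}) ∪ {L ∪ {i, k}}

/-- A weak lowering flip: the inverse operation, replacing `Lik` by `Lj` when
`Li`, `Lk`, `Lij`, `Ljk` are present. -/
def LoweringFlip (n : ℕ) (S S' : Set (Finset ℕ)) : Prop :=
  ∃ (L : Finset ℕ) (i j k : ℕ), L ⊆ Finset.Icc 1 n ∧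
    i ∈ Finset.Icc 1 n ∧ j ∈ Finset.Icc 1 n ∧ k ∈ Finset.Icc 1 n ∧
    i ∉ L ∧ j ∉ L ∧ k ∉ L ∧ i < j ∧ j < k ∧
    L ∪ {i, k} ∈ S ∧ L ∪ {i} ∈ S ∧ L ∪ {k} ∈ S ∧ L ∪ {i, j} ∈ S ∧ L ∪ {j, k} ∈ S ∧
    S' = (S \ {L ∪ {i, k}}) ∪ {L ∪ {j}}

/-- Two collections are flip equivalent if one can be obtained from the other by a finite
sequence of weak raising and lowering flips through weakly separated collections. -/
def FlipEquiv (n : ℕ) (S S' : Set (Finset ℕ)) : Prop :=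
  ∃ (m : ℕ) (C : ℕ → Set (Finset ℕ)), C 0 = S ∧ C m = S' ∧
    (∀ t < m, RaisingFlip n (C t) (C (t + 1)) ∨ LoweringFlip n (C t) (C (t + 1))) ∧
    (∀ t ≤ m, WSColl (C t))

/-! ### Auxiliary lemmas on weak separation -/

lemma ws_symm {I J : Finset ℕ} (h : WeaklySeparated I J) : WeaklySeparated J I :=
  h.symm

lemma ws_master {I J : Finset ℕ} (h : J.card ≤ I.card)
    (hcl : ∀ x ∈ J \ I, (∀ y ∈ I \ J, x < y) ∨ (∀ y ∈ I \ J, y < x)) :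
    WeaklySeparated I J := by
  classical
  refine Or.inl ⟨h, (J \ I).filter (fun x => ∀ y ∈ I \ J, x < y),
    (J \ I).filter (fun x => ¬ ∀ y ∈ I \ J, x < y), ?_, ?_, ?_, ?_⟩
  · exact Finset.disjoint_filter_filter_not _ _ _
  · exact Finset.filter_union_filter_not_eq _ _
  · intro a ha b hb
    exact (Finset.mem_filter.mp ha).2 b hb
  · intro a ha b hb
    rcases hcl b (Finset.mem_filter.mp hb).1 with h1 | h2
    · exact absurd h1 (Finset.mem_filter.mp hb).2
    · exact h2 a ha

lemma ws_of_allLt {I J : Finset ℕ} (h : allLt (J \ I) (I \ J)) : WeaklySeparated I J := by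
  rcases le_total J.card I.card with hc | hc
  · exact ws_master hc (fun x hx => Or.inl (fun y hy => h x hx y hy))
  · exact ws_symm (ws_master hc (fun x hx => Or.inr (fun y hy => h y hy x hx)))

lemma ws_cover {I J : Finset ℕ} (e f : ℕ) (h1 : ∀ y ∈ I \ J, e ≤ y ∧ y ≤ f)
    (h2 : ∀ x ∈ J \ I, x < e ∨ f < x) (hc : J.card ≤ I.card) : WeaklySeparated I J := by
  refine ws_master hc (fun x hx => ?_)
  rcases h2 x hx with h | h
  · exact Or.inl (fun y hy => lt_of_lt_of_le h (h1 y hy).1)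
  · exact Or.inr (fun y hy => lt_of_le_of_lt (h1 y hy).2 h)

lemma ws_interval_big {J : Finset ℕ} (a b : ℕ) (hc : J.card ≤ (Finset.Icc a b).card) :
    WeaklySeparated (Finset.Icc a b) J := by
  refine ws_cover a b (fun y hy => ?_) (fun x hx => ?_) hc
  · exact Finset.mem_Icc.mp (Finset.mem_sdiff.mp hy).1
  · have := (Finset.mem_sdiff.mp hx).2
    rw [Finset.mem_Icc] at this; omega

lemma ws_co_big {I J : Finset ℕ} {n e f : ℕ}
    (hco : Finset.Icc 1 n \ J = Finset.Icc e f) (hIn : I ⊆ Finset.Icc 1 n)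
    (hc : J.card ≤ I.card) : WeaklySeparated I J := by
  refine ws_cover e f (fun y hy => ?_) (fun x hx => ?_) hc
  · rcases Finset.mem_sdiff.mp hy with ⟨hyI, hyJ⟩
    have : y ∈ Finset.Icc 1 n \ J := Finset.mem_sdiff.mpr ⟨hIn hyI, hyJ⟩
    rw [hco, Finset.mem_Icc] at this; exact this
  · rcases Finset.mem_sdiff.mp hx with ⟨hxJ, _⟩
    have h1 : x ∉ Finset.Icc 1 n \ J := by
      intro h; exact (Finset.mem_sdiff.mp h).2 hxJ
    rw [hco, Finset.mem_Icc] at h1; omega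

/-! ### The sets `E p a b` and the cells of the flip sequence -/

def E (p a b : ℕ) : Finset ℕ := Finset.Icc 1 p ∪ Finset.Icc a b

lemma mem_E {x p a b : ℕ} : x ∈ E p a b ↔ (1 ≤ x ∧ x ≤ p) ∨ (a ≤ x ∧ x ≤ b) := by
  simp [E, Finset.mem_union, Finset.mem_Icc]

lemma card_E {p a b : ℕ} (h : p < a) : (E p a b).card = p + (b + 1 - a) := by
  rw [E, Finset.card_union_of_disjoint, Nat.card_Icc, Nat.card_Icc]
  · omega
  · rw [Finset.disjoint_left]; intro x hx hx'
    rw [Finset.mem_Icc] at hx hx'; omega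

lemma ws_prefix {J : Finset ℕ} (p a b : ℕ) (hpre : Finset.Icc 1 p ⊆ J)
    (hc : J.card ≤ (E p a b).card) : WeaklySeparated (E p a b) J := by
  refine ws_cover a b (fun y hy => ?_) (fun x hx => ?_) hc
  · rcases Finset.mem_sdiff.mp hy with ⟨hyI, hyJ⟩
    rcases mem_E.mp hyI with h | h
    · exact absurd (hpre (Finset.mem_Icc.mpr h)) hyJ
    · exact h
  · have := (Finset.mem_sdiff.mp hx).2
    rw [mem_E] at this; omega

/-- `Kst k p c = [1,p] ∪ [p+c+1, c+k]`, a `k`-set when `p ≤ k-1`. -/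
def Kst (k p c : ℕ) : Finset ℕ := E p (p + c + 1) (c + k)

lemma mem_Kst {x k p c : ℕ} :
    x ∈ Kst k p c ↔ (1 ≤ x ∧ x ≤ p) ∨ (p + c + 1 ≤ x ∧ x ≤ c + k) := mem_E

lemma card_Kst {k p c : ℕ} (h : p < k) : (Kst k p c).card = k := by
  rw [Kst, card_E (by omega)]; omega

lemma Kst_subset {n k p c : ℕ} (hp : p < k) (hc : c + k ≤ n) :
    Kst k p c ⊆ Finset.Icc 1 n := by
  intro x hx
  rw [mem_Kst] at hx; rw [Finset.mem_Icc]; omega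

lemma Kst_inj {k p c p' c' : ℕ} (hc : 1 ≤ c) (hc' : 1 ≤ c') (hp : p < k) (hp' : p' < k)
    (h : Kst k p c = Kst k p' c') : p = p' ∧ c = c' := by
  have h1 := Finset.ext_iff.mp h (p + 1)
  have h2 := Finset.ext_iff.mp h (p' + 1)
  have h3 := Finset.ext_iff.mp h (p + c + 1)
  have h4 := Finset.ext_iff.mp h (p' + c' + 1)
  rw [mem_Kst, mem_Kst] at h1 h2 h3 h4
  omega

def rk (n k p c : ℕ) : ℕ := (n - k - c) * (k - 1) + (k - 1 - p)

lemma rk_aux {n k c c' : ℕ} (h : n - k - c' < n - k - c) :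
    (n - k - c') * (k-1) + (k-1) ≤ (n - k - c) * (k-1) := by
  calc (n - k - c') * (k-1) + (k-1) = (n - k - c' + 1) * (k-1) := by ring
  _ ≤ (n - k - c) * (k-1) := Nat.mul_le_mul_right _ (by omega)

lemma rk_lt_rk {n k p c p' c' : ℕ} (hp : 1 ≤ p) (hpk : p ≤ k - 1) (hc : 1 ≤ c)
    (hcn : c ≤ n - k) (hp' : 1 ≤ p') (hpk' : p' ≤ k - 1) (hc' : 1 ≤ c') (hcn' : c' ≤ n - k)
    (h : rk n k p c < rk n k p' c') : c' < c ∨ (c' = c ∧ p' < p) := by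
  rw [rk, rk] at h
  rcases lt_trichotomy (n - k - c) (n - k - c') with h1 | h1 | h1
  · have := rk_aux h1; omega
  · rw [h1] at h; omega
  · have := rk_aux h1; omega

lemma rk_eq_rk {n k p c p' c' : ℕ} (hp : 1 ≤ p) (hpk : p ≤ k - 1) (hc : 1 ≤ c)
    (hcn : c ≤ n - k) (hp' : 1 ≤ p') (hpk' : p' ≤ k - 1) (hc' : 1 ≤ c') (hcn' : c' ≤ n - k)
    (h : rk n k p c = rk n k p' c') : p = p' ∧ c = c' := by
  rw [rk, rk] at h
  rcases lt_trichotomy (n - k - c) (n - k - c') with h1 | h1 | h1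
  · have := rk_aux h1; omega
  · rw [h1] at h; omega
  · have := rk_aux h1; omega

lemma rk_lt_m {n k p c : ℕ} (hp : 1 ≤ p) (hpk : p ≤ k - 1) (hc : 1 ≤ c) (hcn : c ≤ n - k) :
    rk n k p c < (k - 1) * (n - k) := by
  rw [rk]
  have h1 : (n - k - c) * (k-1) + (k-1) ≤ (n - k) * (k - 1) := by
    calc (n - k - c) * (k-1) + (k-1) = (n - k - c + 1) * (k-1) := by ring
    _ ≤ (n - k) * (k-1) := Nat.mul_le_mul_right _ (by omega)
  have h2 : (n - k) * (k - 1) = (k-1) * (n-k) := by ring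
  omega

lemma rk_of {n k A B : ℕ} (hA : A ≤ n - k) (hB : B ≤ k - 1) :
    rk n k (k - 1 - B) (n - k - A) = A * (k-1) + B := by
  rw [rk]
  have h1 : n - k - (n - k - A) = A := by omega
  rw [h1]
  omega

lemma rk_cell {n k t : ℕ} (hk : 2 ≤ k) (ht : t < (k-1)*(n-k)) :
    1 ≤ k - 1 - t % (k-1) ∧ k - 1 - t % (k-1) ≤ k - 1 ∧
    1 ≤ n - k - t / (k-1) ∧ n - k - t / (k-1) ≤ n - k ∧
    rk n k (k - 1 - t % (k-1)) (n - k - t / (k-1)) = t := by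
  have hk1 : 0 < k - 1 := by omega
  have hmod : t % (k-1) < k-1 := Nat.mod_lt _ hk1
  have hdiv : t / (k-1) < n - k := by
    rw [Nat.div_lt_iff_lt_mul hk1]
    calc t < (k-1)*(n-k) := ht
    _ = (n-k)*(k-1) := by ring
  have hdm : (k-1) * (t / (k-1)) + t % (k-1) = t := Nat.div_add_mod t (k-1)
  obtain ⟨A, B, hA, hB⟩ : ∃ A B, t / (k-1) = A ∧ t % (k-1) = B := ⟨_, _, rfl, rfl⟩
  simp only [hA, hB] at hmod hdiv hdm ⊢
  have h5 : rk n k (k - 1 - B) (n - k - A) = A * (k-1) + B := rk_of (by omega) (by omega)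
  have h6 : A * (k-1) = (k-1) * A := by ring
  refine ⟨by omega, by omega, by omega, by omega, by omega⟩

/-! ### The intermediate collections -/

/-- The base collection: intervals of card in `[k,s]` and cointervals of card in `[r,k-1]`. -/
def BaseC (n r s k : ℕ) : Set (Finset ℕ) :=
  {I | IsIntervalSet n I ∧ I.card ∈ Finset.Icc k s} ∪
  {I | IsCointervalSet n I ∧ I.card ∈ Finset.Icc r (k - 1)}

/-- The intermediate collection at time `t`. -/
def CC (n r s k t : ℕ) : Set (Finset ℕ) :=
  (BaseC n r s k ∪
  {X | ∃ p c, 1 ≤ p ∧ p ≤ k - 1 ∧ 1 ≤ c ∧ c ≤ n - k ∧ t ≤ rk n k p c ∧ X = Kst k p c}) ∪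
  {X | ∃ p c, 1 ≤ p ∧ p ≤ k - 1 ∧ 1 ≤ c ∧ c ≤ n - k ∧ rk n k p c < t ∧
      X = Kst (k - 1) (p - 1) c}

lemma ws_KR {k p c p' c' : ℕ} (hpk : p ≤ k-1)
    (hp' : 1 ≤ p') (hpk' : p' ≤ k-1) (hc' : 1 ≤ c')
    (hpp : p ≤ p') (hcc : c' < c) :
    allLt (Kst k p' c' \ Kst (k-1) (p-1) c) (Kst (k-1) (p-1) c \ Kst k p' c') := by
  intro x hx y hy
  rcases Finset.mem_sdiff.mp hx with ⟨hx1, hx2⟩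
  rcases Finset.mem_sdiff.mp hy with ⟨hy1, hy2⟩
  rw [mem_Kst] at hx1 hy1
  rw [mem_Kst] at hx2 hy2
  omega

/-! ### Weak separation of the intermediate collections -/

lemma Kst_eq (k p c : ℕ) : Kst k p c = E p (p + c + 1) (c + k) := rfl

lemma wscoll_CC {n r s k : ℕ} (t : ℕ) (hk : 2 ≤ k) : WSColl (CC n r s k t) := by
  have hdesc : ∀ X ∈ CC n r s k t,
      ((∃ a b, X = Finset.Icc a b) ∧ X ⊆ Finset.Icc 1 n ∧ k ≤ X.card) ∨
      ((∃ e f, Finset.Icc 1 n \ X = Finset.Icc e f) ∧ X ⊆ Finset.Icc 1 n ∧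
        X.card ≤ k - 1) ∨
      (∃ p c, 1 ≤ p ∧ p ≤ k - 1 ∧ 1 ≤ c ∧ c ≤ n - k ∧ t ≤ rk n k p c ∧ X = Kst k p c) ∨
      (∃ p c, 1 ≤ p ∧ p ≤ k - 1 ∧ 1 ≤ c ∧ c ≤ n - k ∧ rk n k p c < t ∧
        X = Kst (k - 1) (p - 1) c) := by
    intro X hX
    rcases hX with (hB | hK) | hR
    · rcases hB with ⟨⟨hsub, a, b, hab⟩, hcard⟩ | ⟨⟨hsub, e, f, hef⟩, hcard⟩
      · exact Or.inl ⟨⟨a, b, hab⟩, hsub, (Finset.mem_Icc.mp hcard).1⟩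
      · exact Or.inr (Or.inl ⟨⟨e, f, hef⟩, hsub, (Finset.mem_Icc.mp hcard).2⟩)
    · exact Or.inr (Or.inr (Or.inl hK))
    · exact Or.inr (Or.inr (Or.inr hR))
  intro I hI J hJ
  have dI := hdesc I hI
  have dJ := hdesc J hJ
  clear hdesc hI hJ
  rcases dI with ⟨⟨a, b, hIeq⟩, hIsub, hIc⟩ | ⟨⟨e, f, hIco⟩, hIsub, hIc⟩ |
      ⟨p, c, hp1, hp2, hc1, hc2, hrkI, hIeq⟩ | ⟨p, c, hp1, hp2, hc1, hc2, hrkI, hIeq⟩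
  · -- I interval
    rcases dJ with ⟨⟨a', b', hJeq⟩, hJsub, hJc⟩ | ⟨⟨e', f', hJco⟩, hJsub, hJc⟩ |
        ⟨p', c', hp1', hp2', hc1', hc2', hrkJ, hJeq⟩ |
        ⟨p', c', hp1', hp2', hc1', hc2', hrkJ, hJeq⟩
    · rcases le_total J.card I.card with h | h
      · subst hIeq; exact ws_interval_big a b h
      · subst hJeq; exact ws_symm (ws_interval_big a' b' h)
    · subst hIeq; exact ws_interval_big a b (by omega)
    · have hJk : J.card = k := by rw [hJeq]; exact card_Kst (by omega)
      subst hIeq; exact ws_interval_big a b (by omega)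
    · have hJk : J.card = k - 1 := by rw [hJeq]; exact card_Kst (by omega)
      subst hIeq; exact ws_interval_big a b (by omega)
  · -- I cointerval
    rcases dJ with ⟨⟨a', b', hJeq⟩, hJsub, hJc⟩ | ⟨⟨e', f', hJco⟩, hJsub, hJc⟩ |
        ⟨p', c', hp1', hp2', hc1', hc2', hrkJ, hJeq⟩ |
        ⟨p', c', hp1', hp2', hc1', hc2', hrkJ, hJeq⟩
    · subst hJeq; exact ws_symm (ws_interval_big a' b' (by omega))
    · rcases le_total J.card I.card with h | h
      · exact ws_co_big hJco hIsub h
      · exact ws_symm (ws_co_big hIco hJsub h)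
    · have hJk : J.card = k := by rw [hJeq]; exact card_Kst (by omega)
      have hJsub : J ⊆ Finset.Icc 1 n := by
        rw [hJeq]; exact Kst_subset (by omega) (by omega)
      exact ws_symm (ws_co_big hIco hJsub (by omega))
    · have hJk : J.card = k - 1 := by rw [hJeq]; exact card_Kst (by omega)
      have hJsub : J ⊆ Finset.Icc 1 n := by
        rw [hJeq]; exact Kst_subset (by omega) (by omega)
      exact ws_symm (ws_co_big hIco hJsub (by omega))
  · -- I = Kst k p c
    have hIk : I.card = k := by rw [hIeq]; exact card_Kst (by omega)
    have hIsub : I ⊆ Finset.Icc 1 n := by rw [hIeq]; exact Kst_subset (by omega) (by omega)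
    rcases dJ with ⟨⟨a', b', hJeq⟩, hJsub, hJc⟩ | ⟨⟨e', f', hJco⟩, hJsub, hJc⟩ |
        ⟨p', c', hp1', hp2', hc1', hc2', hrkJ, hJeq⟩ |
        ⟨p', c', hp1', hp2', hc1', hc2', hrkJ, hJeq⟩
    · subst hJeq; exact ws_symm (ws_interval_big a' b' (by omega))
    · exact ws_co_big hJco hIsub (by omega)
    · -- K K
      have hJk : J.card = k := by rw [hJeq]; exact card_Kst (by omega)
      rcases le_total p p' with h | h
      · subst hIeq
        rw [Kst_eq]
        refine ws_prefix p _ _ (fun x hx => ?_) (by rw [← Kst_eq]; omega)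
        rw [hJeq, mem_Kst]; rw [Finset.mem_Icc] at hx; omega
      · refine ws_symm ?_
        subst hJeq
        rw [Kst_eq]
        refine ws_prefix p' _ _ (fun x hx => ?_) (by rw [← Kst_eq]; omega)
        rw [hIeq, mem_Kst]; rw [Finset.mem_Icc] at hx; omega
    · -- K R : J = Kst (k-1) (p'-1) c', coexistence gives rk p' c' < t ≤ rk p c
      have hJk : J.card = k - 1 := by rw [hJeq]; exact card_Kst (by omega)
      have hlt : rk n k p' c' < rk n k p c := by omega
      rcases rk_lt_rk hp1' hp2' hc1' hc2' hp1 hp2 hc1 hc2 hlt with hcc | ⟨hcc, hpp⟩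
      · -- c < c'
        rcases le_or_gt p' p with hpl | hpl
        · -- p' ≤ p : use allLt lemma : allLt (I \ J) (J \ I) gives WS J I
          refine ws_symm (ws_of_allLt ?_)
          rw [hIeq, hJeq]
          exact ws_KR hp2' hp1 hp2 hc1 hpl hcc
        · -- p < p' : prefix lemma, I has smaller prefix
          subst hIeq
          rw [Kst_eq]
          refine ws_prefix p _ _ (fun x hx => ?_) (by rw [← Kst_eq]; omega)
          rw [hJeq, mem_Kst]; rw [Finset.mem_Icc] at hx; omega
      · -- c = c' and p < p'
        subst hIeq
        rw [Kst_eq]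
        refine ws_prefix p _ _ (fun x hx => ?_) (by rw [← Kst_eq]; omega)
        rw [hJeq, mem_Kst]; rw [Finset.mem_Icc] at hx; omega
  · -- I = Kst (k-1) (p-1) c
    have hIk : I.card = k - 1 := by rw [hIeq]; exact card_Kst (by omega)
    have hIsub : I ⊆ Finset.Icc 1 n := by rw [hIeq]; exact Kst_subset (by omega) (by omega)
    rcases dJ with ⟨⟨a', b', hJeq⟩, hJsub, hJc⟩ | ⟨⟨e', f', hJco⟩, hJsub, hJc⟩ |
        ⟨p', c', hp1', hp2', hc1', hc2', hrkJ, hJeq⟩ |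
        ⟨p', c', hp1', hp2', hc1', hc2', hrkJ, hJeq⟩
    · subst hJeq; exact ws_symm (ws_interval_big a' b' (by omega))
    · exact ws_co_big hJco hIsub (by omega)
    · -- R K : I = Kst (k-1) (p-1) c, J = Kst k p' c', rk p c < t ≤ rk p' c'
      have hJk : J.card = k := by rw [hJeq]; exact card_Kst (by omega)
      have hlt : rk n k p c < rk n k p' c' := by omega
      rcases rk_lt_rk hp1 hp2 hc1 hc2 hp1' hp2' hc1' hc2' hlt with hcc | ⟨hcc, hpp⟩
      · rcases le_or_gt p p' with hpl | hpl
        · refine ws_of_allLt ?_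
          rw [hIeq, hJeq]
          exact ws_KR hp2 hp1' hp2' hc1' hpl hcc
        · refine ws_symm ?_
          subst hJeq
          rw [Kst_eq]
          refine ws_prefix p' _ _ (fun x hx => ?_) (by rw [← Kst_eq]; omega)
          rw [hIeq, mem_Kst]; rw [Finset.mem_Icc] at hx; omega
      · refine ws_symm ?_
        subst hJeq
        rw [Kst_eq]
        refine ws_prefix p' _ _ (fun x hx => ?_) (by rw [← Kst_eq]; omega)
        rw [hIeq, mem_Kst]; rw [Finset.mem_Icc] at hx; omega
    · -- R R
      have hJk : J.card = k - 1 := by rw [hJeq]; exact card_Kst (by omega)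
      rcases le_total p p' with h | h
      · subst hIeq
        rw [Kst_eq]
        refine ws_prefix (p-1) _ _ (fun x hx => ?_) (by rw [← Kst_eq]; omega)
        rw [hJeq, mem_Kst]; rw [Finset.mem_Icc] at hx; omega
      · refine ws_symm ?_
        subst hJeq
        rw [Kst_eq]
        refine ws_prefix (p'-1) _ _ (fun x hx => ?_) (by rw [← Kst_eq]; omega)
        rw [hIeq, mem_Kst]; rw [Finset.mem_Icc] at hx; omega

/-! ### The flip step -/

lemma rk_unfold (n k p c : ℕ) : rk n k p c = (n - k - c) * (k - 1) + (k - 1 - p) := rfl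

lemma rk_succ_p {n k p c : ℕ} (hk : 2 ≤ k) (hp : p ≤ k - 2) :
    rk n k (p+1) c + 1 = rk n k p c := by
  rw [rk_unfold, rk_unfold]; omega

lemma rk_succ_c {n k p c : ℕ} (hc : c + 1 ≤ n - k) (hp1 : 1 ≤ p) (hp : p ≤ k - 1) :
    rk n k p (c+1) + (k-1) = rk n k p c := by
  rw [rk_unfold, rk_unfold]
  have h : n - k - c = (n - k - (c+1)) + 1 := by omega
  rw [h]
  have h2 : (n - k - (c+1) + 1) * (k-1) = (n - k - (c+1)) * (k-1) + (k-1) := by ring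
  omega

lemma Kst_not_interval {k p c a b : ℕ} (hp : 1 ≤ p) (hc : 1 ≤ c) (hpk : p ≤ k - 1)
    (h : Kst k p c = Finset.Icc a b) : False := by
  have h1 := Finset.ext_iff.mp h p
  have h2 := Finset.ext_iff.mp h (p+1)
  have h3 := Finset.ext_iff.mp h (c+k)
  rw [mem_Kst, Finset.mem_Icc] at h1 h2 h3
  omega

lemma Res_not_cointerval {n k p c e f : ℕ} (hp : 1 ≤ p) (hpk : p ≤ k - 1) (hc : 1 ≤ c)
    (hcn : c ≤ n - k)
    (h : Finset.Icc 1 n \ Kst (k-1) (p-1) c = Finset.Icc e f) : False := by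
  have h1 := Finset.ext_iff.mp h p
  have h2 := Finset.ext_iff.mp h (p+c)
  have h3 := Finset.ext_iff.mp h (c+k)
  simp only [Finset.mem_sdiff, mem_Kst, Finset.mem_Icc] at h1 h2 h3
  omega

lemma flip_step {n r s k : ℕ} (t : ℕ) (hr : 1 ≤ r) (hrk : r ≤ k-1) (hk : 2 ≤ k)
    (hks : k ≤ s) (ht : t < (k-1)*(n-k)) :
    LoweringFlip n (CC n r s k t) (CC n r s k (t+1)) ∧
    RaisingFlip n (CC n r s k (t+1)) (CC n r s k t) := by
  obtain ⟨hp1, hp2, hc1, hc2, hrk'⟩ := rk_cell hk ht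
  obtain ⟨p, c, hpdef, hcdef⟩ : ∃ p c, k - 1 - t % (k-1) = p ∧ n - k - t / (k-1) = c :=
    ⟨_, _, rfl, rfl⟩
  simp only [hpdef, hcdef] at hp1 hp2 hc1 hc2 hrk'
  have hkn : k + 1 ≤ n := by omega
  set L : Finset ℕ := E (p-1) (p+c+1) (c+k-1) with hL
  -- the five auxiliary set identities
  have e1 : L ∪ {p, c+k} = Kst k p c := by
    ext x
    simp only [hL, Kst, Finset.mem_union, mem_E, Finset.mem_insert, Finset.mem_singleton]
    omega
  have e6 : L ∪ {p+c} = Kst (k-1) (p-1) c := by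
    ext x
    simp only [hL, Kst, Finset.mem_union, mem_E, Finset.mem_singleton]
    omega
  -- membership of the four witnesses in CC u for t ≤ u ≤ t+1
  have wit : ∀ u, t ≤ u → u ≤ t + 1 →
      L ∪ {p} ∈ CC n r s k u ∧ L ∪ {c+k} ∈ CC n r s k u ∧
      L ∪ {p, p+c} ∈ CC n r s k u ∧ L ∪ {p+c, c+k} ∈ CC n r s k u := by
    intro u hu1 hu2
    refine ⟨?_, ?_, ?_, ?_⟩
    · -- L ∪ {p} : Res(p+1,c) if p ≤ k-2, else cointerval [1,k-1]
      rcases le_or_gt p (k-2) with hcase | hcase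
      · have e : L ∪ {p} = Kst (k-1) ((p+1)-1) c := by
          ext x
          simp only [hL, Kst, Finset.mem_union, mem_E, Finset.mem_singleton]
          omega
        refine Or.inr ⟨p+1, c, by omega, by omega, hc1, hc2, ?_, e⟩
        have := rk_succ_p (n := n) (c := c) hk hcase
        omega
      · have e : L ∪ {p} = Finset.Icc 1 (k-1) := by
          ext x
          simp only [hL, Finset.mem_union, mem_E, Finset.mem_singleton, Finset.mem_Icc]
          omega
        refine Or.inl (Or.inl (Or.inr ⟨⟨?_, ⟨k, n, ?_⟩⟩, ?_⟩))
        · rw [e]; intro x hx; rw [Finset.mem_Icc] at hx ⊢; omega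
        · rw [e]; ext x; simp only [Finset.mem_sdiff, Finset.mem_Icc]; omega
        · rw [e, Nat.card_Icc, Finset.mem_Icc]; omega
    · -- L ∪ {c+k} : Res(p,c+1) if c ≤ n-k-1, else cointerval
      rcases le_or_gt (c+1) (n-k) with hcase | hcase
      · have e : L ∪ {c+k} = Kst (k-1) (p-1) (c+1) := by
          ext x
          simp only [hL, Kst, Finset.mem_union, mem_E, Finset.mem_singleton]
          omega
        refine Or.inr ⟨p, c+1, hp1, hp2, by omega, hcase, ?_, e⟩
        have := rk_succ_c (n := n) hcase hp1 hp2
        omega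
      · have e : L ∪ {c+k} = E (p-1) (p+c+1) n := by
          have hn : c + k = n := by omega
          rw [← hn]
          ext x
          simp only [hL, Finset.mem_union, mem_E, Finset.mem_singleton]
          omega
        refine Or.inl (Or.inl (Or.inr ⟨⟨?_, ⟨p, p+c, ?_⟩⟩, ?_⟩))
        · rw [e]; intro x hx; rw [mem_E] at hx; rw [Finset.mem_Icc]; omega
        · rw [e]; ext x; simp only [Finset.mem_sdiff, mem_E, Finset.mem_Icc]; omega
        · rw [e, card_E (by omega), Finset.mem_Icc]; omega
    · -- L ∪ {p, p+c} : Kst k p (c-1) if c ≥ 2, else the interval [1,k]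
      rcases le_or_gt 2 c with hcase | hcase
      · have e : L ∪ {p, p+c} = Kst k p (c-1) := by
          ext x
          simp only [hL, Kst, Finset.mem_union, mem_E, Finset.mem_insert,
            Finset.mem_singleton]
          omega
        refine Or.inl (Or.inr ⟨p, c-1, hp1, hp2, by omega, by omega, ?_, e⟩)
        have h5 : rk n k p (c-1+1) + (k-1) = rk n k p (c-1) := rk_succ_c (by omega) hp1 hp2
        have h6 : c - 1 + 1 = c := by omega
        rw [h6] at h5
        omega
      · have e : L ∪ {p, p+c} = Finset.Icc 1 k := by
          ext x
          simp only [hL, Finset.mem_union, mem_E, Finset.mem_insert, Finset.mem_singleton,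
            Finset.mem_Icc]
          omega
        refine Or.inl (Or.inl (Or.inl ⟨⟨?_, ⟨1, k, e ▸ rfl⟩⟩, ?_⟩))
        · rw [e]; intro x hx; rw [Finset.mem_Icc] at hx ⊢; omega
        · rw [e, Nat.card_Icc, Finset.mem_Icc]; omega
    · -- L ∪ {p+c, c+k} : Kst k (p-1) c if p ≥ 2, else the interval [c+1,c+k]
      rcases le_or_gt 2 p with hcase | hcase
      · have e : L ∪ {p+c, c+k} = Kst k (p-1) c := by
          ext x
          simp only [hL, Kst, Finset.mem_union, mem_E, Finset.mem_insert,
            Finset.mem_singleton]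
          omega
        refine Or.inl (Or.inr ⟨p-1, c, by omega, by omega, hc1, hc2, ?_, e⟩)
        have h5 : rk n k (p-1+1) c + 1 = rk n k (p-1) c := rk_succ_p hk (by omega)
        have h6 : p - 1 + 1 = p := by omega
        rw [h6] at h5
        omega
      · have e : L ∪ {p+c, c+k} = Finset.Icc (c+1) (c+k) := by
          ext x
          simp only [hL, Finset.mem_union, mem_E, Finset.mem_insert, Finset.mem_singleton,
            Finset.mem_Icc]
          omega
        refine Or.inl (Or.inl (Or.inl ⟨⟨?_, ⟨c+1, c+k, e ▸ rfl⟩⟩, ?_⟩))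
        · rw [e]; intro x hx; rw [Finset.mem_Icc] at hx ⊢; omega
        · rw [e, Nat.card_Icc, Finset.mem_Icc]; omega
  -- non-membership facts
  have hXcard : (Kst k p c).card = k := card_Kst (by omega)
  have hYcard : (Kst (k-1) (p-1) c).card = k - 1 := card_Kst (by omega)
  have hXnotBase : Kst k p c ∉ BaseC n r s k := by
    rintro (⟨⟨_, a, b, hab⟩, hcard⟩ | ⟨⟨_, e, f, hef⟩, hcard⟩)
    · exact Kst_not_interval hp1 hc1 hp2 hab
    · rw [hXcard, Finset.mem_Icc] at hcard; omega
  have hYnotBase : Kst (k-1) (p-1) c ∉ BaseC n r s k := by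
    rintro (⟨⟨_, a, b, hab⟩, hcard⟩ | ⟨⟨_, e, f, hef⟩, hcard⟩)
    · rw [hYcard, Finset.mem_Icc] at hcard; omega
    · exact Res_not_cointerval hp1 hp2 hc1 hc2 hef
  -- the two set equalities
  have hset1 : CC n r s k (t+1) =
      (CC n r s k t \ {Kst k p c}) ∪ {Kst (k-1) (p-1) c} := by
    ext X
    constructor
    · rintro ((hB | ⟨p₀, c₀, h1, h2, h3, h4, h5, h6⟩) | ⟨p₀, c₀, h1, h2, h3, h4, h5, h6⟩)
      · refine Or.inl ⟨Or.inl (Or.inl hB), ?_⟩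
        intro hXX
        rw [Set.mem_singleton_iff] at hXX
        exact hXnotBase (hXX ▸ hB)
      · refine Or.inl ⟨Or.inl (Or.inr ⟨p₀, c₀, h1, h2, h3, h4, by omega, h6⟩), ?_⟩
        intro hXX
        rw [Set.mem_singleton_iff] at hXX
        rw [hXX] at h6
        obtain ⟨hpe, hce⟩ := Kst_inj hc1 h3 (by omega) (by omega) h6
        rw [← hpe, ← hce] at h5
        omega
      · rcases lt_or_ge (rk n k p₀ c₀) t with hcase | hcase
        · refine Or.inl ⟨Or.inr ⟨p₀, c₀, h1, h2, h3, h4, hcase, h6⟩, ?_⟩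
          intro hXX
          rw [Set.mem_singleton_iff] at hXX
          rw [hXX] at h6
          have : (Kst k p c).card = (Kst (k-1) (p₀-1) c₀).card := by rw [h6]
          rw [hXcard, card_Kst (k := k-1) (by omega)] at this
          omega
        · have heq : rk n k p₀ c₀ = t := by omega
          obtain ⟨hpe, hce⟩ := rk_eq_rk h1 h2 h3 h4 hp1 hp2 hc1 hc2 (by omega)
          right
          rw [Set.mem_singleton_iff, h6, hpe, hce]
    · rintro (⟨hmem, hne⟩ | hY)
      · rw [Set.mem_singleton_iff] at hne
        rcases hmem with (hB | ⟨p₀, c₀, h1, h2, h3, h4, h5, h6⟩) | ⟨p₀, c₀, h1, h2, h3, h4, h5, h6⟩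
        · exact Or.inl (Or.inl hB)
        · rcases le_or_gt (t+1) (rk n k p₀ c₀) with hcase | hcase
          · exact Or.inl (Or.inr ⟨p₀, c₀, h1, h2, h3, h4, hcase, h6⟩)
          · exfalso
            have heq : rk n k p₀ c₀ = t := by omega
            obtain ⟨hpe, hce⟩ := rk_eq_rk h1 h2 h3 h4 hp1 hp2 hc1 hc2 (by omega)
            rw [h6, hpe, hce] at hne
            exact hne rfl
        · exact Or.inr ⟨p₀, c₀, h1, h2, h3, h4, by omega, h6⟩
      · rw [Set.mem_singleton_iff] at hY
        exact Or.inr ⟨p, c, hp1, hp2, hc1, hc2, by omega, hY⟩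
  have hset2 : CC n r s k t =
      (CC n r s k (t+1) \ {Kst (k-1) (p-1) c}) ∪ {Kst k p c} := by
    ext X
    constructor
    · rintro ((hB | ⟨p₀, c₀, h1, h2, h3, h4, h5, h6⟩) | ⟨p₀, c₀, h1, h2, h3, h4, h5, h6⟩)
      · refine Or.inl ⟨Or.inl (Or.inl hB), ?_⟩
        intro hXX
        rw [Set.mem_singleton_iff] at hXX
        exact hYnotBase (hXX ▸ hB)
      · rcases le_or_gt (t+1) (rk n k p₀ c₀) with hcase | hcase
        · refine Or.inl ⟨Or.inl (Or.inr ⟨p₀, c₀, h1, h2, h3, h4, hcase, h6⟩), ?_⟩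
          intro hXX
          rw [Set.mem_singleton_iff] at hXX
          rw [hXX] at h6
          have : (Kst (k-1) (p-1) c).card = (Kst k p₀ c₀).card := by rw [h6]
          rw [hYcard, card_Kst (by omega)] at this
          omega
        · have heq : rk n k p₀ c₀ = t := by omega
          obtain ⟨hpe, hce⟩ := rk_eq_rk h1 h2 h3 h4 hp1 hp2 hc1 hc2 (by omega)
          right
          rw [Set.mem_singleton_iff, h6, hpe, hce]
      · refine Or.inl ⟨Or.inr ⟨p₀, c₀, h1, h2, h3, h4, by omega, h6⟩, ?_⟩
        intro hXX
        rw [Set.mem_singleton_iff] at hXX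
        rw [hXX] at h6
        obtain ⟨hpe, hce⟩ := Kst_inj hc1 h3 (by omega) (by omega) h6
        have hpp : p₀ = p := by omega
        rw [hpp, ← hce] at h5
        omega
    · rintro (⟨hmem, hne⟩ | hX)
      · rw [Set.mem_singleton_iff] at hne
        rcases hmem with (hB | ⟨p₀, c₀, h1, h2, h3, h4, h5, h6⟩) | ⟨p₀, c₀, h1, h2, h3, h4, h5, h6⟩
        · exact Or.inl (Or.inl hB)
        · exact Or.inl (Or.inr ⟨p₀, c₀, h1, h2, h3, h4, by omega, h6⟩)
        · rcases lt_or_ge (rk n k p₀ c₀) t with hcase | hcase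
          · exact Or.inr ⟨p₀, c₀, h1, h2, h3, h4, hcase, h6⟩
          · exfalso
            have heq : rk n k p₀ c₀ = t := by omega
            obtain ⟨hpe, hce⟩ := rk_eq_rk h1 h2 h3 h4 hp1 hp2 hc1 hc2 (by omega)
            rw [h6, hpe, hce] at hne
            exact hne rfl
      · rw [Set.mem_singleton_iff] at hX
        exact Or.inl (Or.inr ⟨p, c, hp1, hp2, hc1, hc2, by omega, hX⟩)
  obtain ⟨w1, w2, w3, w4⟩ := wit t le_rfl (by omega)
  obtain ⟨w1', w2', w3', w4'⟩ := wit (t+1) (by omega) le_rfl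
  constructor
  · refine ⟨L, p, p+c, c+k, ?_, ?_, ?_, ?_, ?_, ?_, ?_, by omega, by omega,
      ?_, w1, w2, w3, w4, ?_⟩
    · intro x hx; rw [hL, mem_E] at hx; rw [Finset.mem_Icc]; omega
    · rw [Finset.mem_Icc]; omega
    · rw [Finset.mem_Icc]; omega
    · rw [Finset.mem_Icc]; omega
    · rw [hL, mem_E]; omega
    · rw [hL, mem_E]; omega
    · rw [hL, mem_E]; omega
    · rw [e1]
      exact Or.inl (Or.inr ⟨p, c, hp1, hp2, hc1, hc2, by omega, rfl⟩)
    · rw [e1, e6]; exact hset1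
  · refine ⟨L, p, p+c, c+k, ?_, ?_, ?_, ?_, ?_, ?_, ?_, by omega, by omega,
      ?_, w1', w2', w3', w4', ?_⟩
    · intro x hx; rw [hL, mem_E] at hx; rw [Finset.mem_Icc]; omega
    · rw [Finset.mem_Icc]; omega
    · rw [Finset.mem_Icc]; omega
    · rw [Finset.mem_Icc]; omega
    · rw [hL, mem_E]; omega
    · rw [hL, mem_E]; omega
    · rw [hL, mem_E]; omega
    · rw [e6]
      exact Or.inr ⟨p, c, hp1, hp2, hc1, hc2, by omega, rfl⟩
    · rw [e6, e1]; exact hset2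

/-! ### Normal form for unions of two intervals containing 1 -/

lemma norm2' {n kk : ℕ} {I : Finset ℕ} {a b c d : ℕ}
    (hab : a ≤ b) (hcd : c ≤ d) (hord : b < c)
    (hI : I = Finset.Icc a b ∪ Finset.Icc c d)
    (hsub : I ⊆ Finset.Icc 1 n) (h1 : 1 ∈ I) (hcard : I.card = kk) :
    (∃ a' b', I = Finset.Icc a' b') ∨
    (∃ p cc, 1 ≤ p ∧ p ≤ kk - 1 ∧ 1 ≤ cc ∧ cc ≤ n - kk ∧ I = Kst kk p cc) := by
  have ha1 : 1 ≤ a := by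
    have : a ∈ I := by rw [hI]; exact Finset.mem_union_left _ (Finset.mem_Icc.mpr ⟨le_rfl, hab⟩)
    exact (Finset.mem_Icc.mp (hsub this)).1
  have hdn : d ≤ n := by
    have : d ∈ I := by
      rw [hI]; exact Finset.mem_union_right _ (Finset.mem_Icc.mpr ⟨hcd, le_rfl⟩)
    exact (Finset.mem_Icc.mp (hsub this)).2
  rcases le_or_gt c (b+1) with hc | hc
  · left
    refine ⟨a, d, ?_⟩
    rw [hI]; ext x
    simp only [Finset.mem_union, Finset.mem_Icc]
    omega
  · -- genuine gap, so 1 ∈ Icc a b hence a = 1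
    have ha : a = 1 := by
      rw [hI] at h1
      rcases Finset.mem_union.mp h1 with h | h <;> rw [Finset.mem_Icc] at h <;> omega
    have hkk : kk = b + (d + 1 - c) := by
      rw [← hcard, hI, Finset.card_union_of_disjoint, Nat.card_Icc, Nat.card_Icc]
      · omega
      · rw [Finset.disjoint_left]
        intro x hx hx'
        rw [Finset.mem_Icc] at hx hx'
        omega
    right
    refine ⟨b, c - b - 1, by omega, by omega, by omega, by omega, ?_⟩
    rw [hI]; ext x
    simp only [Finset.mem_union, Finset.mem_Icc, mem_Kst]
    omega

lemma norm2 {n kk : ℕ} {I A B : Finset ℕ} {a b c d : ℕ}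
    (hA : A = Finset.Icc a b) (hB : B = Finset.Icc c d) (hd : Disjoint A B)
    (hI : I = A ∪ B) (hsub : I ⊆ Finset.Icc 1 n) (h1 : 1 ∈ I) (hcard : I.card = kk) :
    (∃ a' b', I = Finset.Icc a' b') ∨
    (∃ p cc, 1 ≤ p ∧ p ≤ kk - 1 ∧ 1 ≤ cc ∧ cc ≤ n - kk ∧ I = Kst kk p cc) := by
  subst hA hB hI
  rcases le_or_gt a b with hab | hab
  · rcases le_or_gt c d with hcd | hcd
    · -- both nonempty
      have hnot : ¬ (c ≤ b ∧ a ≤ d) := by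
        intro ⟨h1', h2'⟩
        have hmem : max a c ∈ Finset.Icc a b ∩ Finset.Icc c d := by
          rw [Finset.mem_inter, Finset.mem_Icc, Finset.mem_Icc]
          omega
        rw [Finset.disjoint_left] at hd
        rw [Finset.mem_inter] at hmem
        exact hd hmem.1 hmem.2
      rcases le_or_gt c b with h | h
      · -- then d < a, so B is below A
        have hord : d < a := by omega
        have hcomm : Finset.Icc a b ∪ Finset.Icc c d = Finset.Icc c d ∪ Finset.Icc a b :=
          Finset.union_comm _ _
        rw [hcomm] at hsub h1 hcard ⊢
        exact norm2' hcd hab hord rfl hsub h1 hcard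
      · exact norm2' hab hcd h rfl hsub h1 hcard
    · -- B empty
      have hBe : Finset.Icc c d = ∅ := Finset.Icc_eq_empty (by omega)
      rw [hBe, Finset.union_empty]
      exact Or.inl ⟨a, b, rfl⟩
  · have hAe : Finset.Icc a b = ∅ := Finset.Icc_eq_empty (by omega)
    rw [hAe, Finset.empty_union]
    exact Or.inl ⟨c, d, rfl⟩

/-! ### Endpoints of the flip sequence -/

lemma CC0_eq {n r s k : ℕ} (hr : 1 ≤ r) (hrk : r ≤ k-1) (hk : 2 ≤ k) (hks : k ≤ s)
    (hsn : s ≤ n - 1) (hn : 2 ≤ n) :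
    CC n r s k 0 = SJrect n (Finset.Icc r s) k := by
  ext X
  simp only [CC, BaseC, SJrect, Set.mem_union, Set.mem_setOf_eq]
  constructor
  · rintro (((⟨hIv, hcard⟩ | ⟨hCo, hcard⟩) | ⟨p, c, h1, h2, h3, h4, _, h6⟩) |
      ⟨p, c, h1, h2, h3, h4, h5, h6⟩)
    · rw [Finset.mem_Icc] at hcard
      rcases eq_or_lt_of_le hcard.1 with heq | hlt
      · exact Or.inl (Or.inl ⟨hIv.1, heq.symm, Or.inl hIv.2⟩)
      · exact Or.inl (Or.inr ⟨hIv, Finset.mem_Icc.mpr ⟨by omega, hcard.2⟩, hlt⟩)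
    · rw [Finset.mem_Icc] at hcard
      exact Or.inr ⟨hCo, Finset.mem_Icc.mpr ⟨hcard.1, by omega⟩, by omega⟩
    · subst h6
      refine Or.inl (Or.inl ⟨Kst_subset (by omega) (by omega), card_Kst (by omega),
        Or.inr ⟨by rw [mem_Kst]; omega, Finset.Icc 1 p, Finset.Icc (p+c+1) (c+k),
          ⟨1, p, rfl⟩, ⟨p+c+1, c+k, rfl⟩, ?_, rfl⟩⟩)
      rw [Finset.disjoint_left]
      intro x hx hx'
      rw [Finset.mem_Icc] at hx hx'
      omega
    · omega
  · rintro ((⟨hsub, hcard, hIv | ⟨h1X, A, B, ⟨a, b, hA⟩, ⟨cc, dd, hB⟩, hdisj, hU⟩⟩ |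
      ⟨hIv, hcard, hlt⟩) | ⟨hCo, hcard, hlt⟩)
    · exact Or.inl (Or.inl (Or.inl ⟨⟨hsub, hIv⟩, Finset.mem_Icc.mpr ⟨by omega, by omega⟩⟩))
    · rcases norm2 hA hB hdisj hU hsub h1X hcard with ⟨a', b', hI⟩ |
        ⟨p, cc', hp1, hp2, hc1, hc2, hI⟩
      · exact Or.inl (Or.inl (Or.inl ⟨⟨hsub, a', b', hI⟩,
          Finset.mem_Icc.mpr ⟨by omega, by omega⟩⟩))
      · exact Or.inl (Or.inr ⟨p, cc', hp1, hp2, hc1, hc2, by omega, hI⟩)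
    · rw [Finset.mem_Icc] at hcard
      exact Or.inl (Or.inl (Or.inl ⟨hIv, Finset.mem_Icc.mpr ⟨by omega, hcard.2⟩⟩))
    · rw [Finset.mem_Icc] at hcard
      exact Or.inl (Or.inl (Or.inr ⟨hCo, Finset.mem_Icc.mpr ⟨hcard.1, by omega⟩⟩))

lemma co_decompose {n : ℕ} {X : Finset ℕ} (hsub : X ⊆ Finset.Icc 1 n)
    (hco : ∃ e f, Finset.Icc 1 n \ X = Finset.Icc e f) (hlt : X.card < n) :
    ∃ e f, 1 ≤ e ∧ e ≤ f ∧ f ≤ n ∧ X = Finset.Icc 1 (e-1) ∪ Finset.Icc (f+1) n := by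
  obtain ⟨e, f, hef⟩ := hco
  have hcards : (Finset.Icc 1 n \ X).card = n - X.card := by
    rw [Finset.card_sdiff_of_subset hsub, Nat.card_Icc]
    omega
  have hne : 0 < (Finset.Icc e f).card := by rw [← hef]; omega
  rw [Nat.card_Icc] at hne
  have hef2 : e ≤ f := by omega
  have hsubn : Finset.Icc e f ⊆ Finset.Icc 1 n := by rw [← hef]; exact Finset.sdiff_subset
  have he1 : 1 ≤ e := (Finset.mem_Icc.mp (hsubn (Finset.mem_Icc.mpr ⟨le_rfl, hef2⟩))).1
  have hfn : f ≤ n := (Finset.mem_Icc.mp (hsubn (Finset.mem_Icc.mpr ⟨hef2, le_rfl⟩))).2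
  refine ⟨e, f, he1, hef2, hfn, ?_⟩
  ext x
  have hx1 := Finset.ext_iff.mp hef x
  simp only [Finset.mem_sdiff, Finset.mem_Icc] at hx1
  simp only [Finset.mem_union, Finset.mem_Icc]
  constructor
  · intro hx
    have := Finset.mem_Icc.mp (hsub hx)
    by_cases hxe : e ≤ x ∧ x ≤ f
    · exact absurd hx (hx1.mpr hxe).2
    · omega
  · intro hx
    by_contra hxX
    have := hx1.mp ⟨by omega, hxX⟩
    omega

lemma interval_km1_in_CCm {n r s k : ℕ} (hr : 1 ≤ r) (hrk : r ≤ k-1) (hk : 2 ≤ k)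
    (hks : k ≤ s) (hsn : s ≤ n - 1) {X : Finset ℕ} (hsub : X ⊆ Finset.Icc 1 n)
    (hcard : X.card = k - 1) {a b : ℕ} (hX : X = Finset.Icc a b) :
    X ∈ CC n r s k ((k-1)*(n-k)) := by
  have hab : a ≤ b := by
    by_contra hab
    rw [hX, Finset.Icc_eq_empty (by omega), Finset.card_empty] at hcard
    omega
  have hbn : b ≤ n := by
    have : b ∈ X := hX ▸ Finset.mem_Icc.mpr ⟨hab, le_rfl⟩
    exact (Finset.mem_Icc.mp (hsub this)).2
  have ha1 : 1 ≤ a := by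
    have : a ∈ X := hX ▸ Finset.mem_Icc.mpr ⟨le_rfl, hab⟩
    exact (Finset.mem_Icc.mp (hsub this)).1
  have hb : b = a + k - 2 := by
    rw [hX, Nat.card_Icc] at hcard
    omega
  rcases eq_or_lt_of_le ha1 with ha1' | ha1'
  · -- a = 1 : cointerval [1,k-1]
    refine Or.inl (Or.inl (Or.inr ⟨⟨hsub, k, n, ?_⟩, ?_⟩))
    · rw [hX, ← ha1']
      ext x
      simp only [Finset.mem_sdiff, Finset.mem_Icc]
      omega
    · rw [hX, Nat.card_Icc, Finset.mem_Icc]; omega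
  · rcases eq_or_lt_of_le hbn with hbn' | hbn'
    · -- b = n : cointerval
      refine Or.inl (Or.inl (Or.inr ⟨⟨hsub, 1, a-1, ?_⟩, ?_⟩))
      · rw [hX, hbn']
        ext x
        simp only [Finset.mem_sdiff, Finset.mem_Icc]
        omega
      · rw [hX, Nat.card_Icc, Finset.mem_Icc]; omega
    · -- interior interval : the flipped cell (1, a-1)
      refine Or.inr ⟨1, a-1, le_rfl, by omega, by omega, by omega,
        rk_lt_m le_rfl (by omega) (by omega) (by omega), ?_⟩
      rw [hX]
      ext x
      rw [Finset.mem_Icc, mem_Kst]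
      omega

lemma CCm_eq {n r s k : ℕ} (hr : 1 ≤ r) (hrk : r ≤ k-1) (hk : 2 ≤ k) (hks : k ≤ s)
    (hsn : s ≤ n - 1) (hn : 2 ≤ n) :
    CC n r s k ((k-1)*(n-k)) = SJrect n (Finset.Icc r s) (k-1) := by
  ext X
  constructor
  · rintro (((⟨hIv, hcard⟩ | ⟨hCo, hcard⟩) | ⟨p, c, h1, h2, h3, h4, h5, h6⟩) |
      ⟨p, c, h1, h2, h3, h4, h5, h6⟩)
    · -- interval of card in [k,s] goes to the middle part
      rw [Finset.mem_Icc] at hcard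
      exact Or.inl (Or.inr ⟨hIv, Finset.mem_Icc.mpr ⟨by omega, hcard.2⟩, by omega⟩)
    · -- cointerval: if card ≤ k-2 it is in the cointerval part, if card = k-1 in Srect
      rw [Finset.mem_Icc] at hcard
      rcases lt_or_ge X.card (k-1) with hcase | hcase
      · exact Or.inr ⟨hCo, Finset.mem_Icc.mpr ⟨hcard.1, by omega⟩, hcase⟩
      · -- card = k-1
        have hXcard : X.card = k - 1 := by omega
        obtain ⟨e, f, he1, hef, hfn, hX⟩ := co_decompose hCo.1 hCo.2 (by omega)
        rcases le_or_gt 2 e with he2 | he2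
        · -- 1 belongs to X : union of two intervals
          refine Or.inl (Or.inl ⟨hCo.1, hXcard, Or.inr ⟨?_,
            Finset.Icc 1 (e-1), Finset.Icc (f+1) n, ⟨1, e-1, rfl⟩, ⟨f+1, n, rfl⟩, ?_, hX⟩⟩)
          · rw [hX, Finset.mem_union, Finset.mem_Icc]; omega
          · rw [Finset.disjoint_left]
            intro x hx hx'
            rw [Finset.mem_Icc] at hx hx'
            omega
        · -- e = 1 : X is an interval
          refine Or.inl (Or.inl ⟨hCo.1, hXcard, Or.inl ⟨f+1, n, ?_⟩⟩)
          rw [hX]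
          ext x
          simp only [Finset.mem_union, Finset.mem_Icc]
          omega
    · -- no unflipped cells remain
      exfalso
      have := rk_lt_m (n := n) h1 h2 h3 h4
      omega
    · -- a flipped cell: element of Srect n (k-1)
      subst h6
      rcases le_or_gt 2 p with hp2' | hp2'
      · refine Or.inl (Or.inl ⟨Kst_subset (by omega) (by omega), card_Kst (by omega),
          Or.inr ⟨by rw [mem_Kst]; omega, Finset.Icc 1 (p-1), Finset.Icc (p-1+c+1) (c+(k-1)),
            ⟨1, p-1, rfl⟩, ⟨p-1+c+1, c+(k-1), rfl⟩, ?_, rfl⟩⟩)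
        rw [Finset.disjoint_left]
        intro x hx hx'
        rw [Finset.mem_Icc] at hx hx'
        omega
      · -- p = 1 : an interval
        refine Or.inl (Or.inl ⟨Kst_subset (by omega) (by omega), card_Kst (by omega),
          Or.inl ⟨c+1, c+(k-1), ?_⟩⟩)
        ext x
        rw [mem_Kst, Finset.mem_Icc]
        omega
  · rintro ((⟨hsub, hcard, hIv | ⟨h1X, A, B, ⟨a, b, hA⟩, ⟨cc, dd, hB⟩, hdisj, hU⟩⟩ |
      ⟨hIv, hcard, hlt⟩) | ⟨hCo, hcard, hlt⟩)
    · -- interval of card k-1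
      obtain ⟨a, b, hX⟩ := hIv
      exact interval_km1_in_CCm hr hrk hk hks hsn hsub hcard hX
    · -- two-interval member of Srect n (k-1)
      rcases norm2 hA hB hdisj hU hsub h1X hcard with ⟨a', b', hI⟩ |
        ⟨p, cc', hp1, hp2, hc1, hc2, hI⟩
      · exact interval_km1_in_CCm hr hrk hk hks hsn hsub hcard hI
      · -- Kst (k-1) p cc', cc' ≤ n-(k-1)
        rcases le_or_gt cc' (n-k) with hcase | hcase
        · refine Or.inr ⟨p+1, cc', by omega, by omega, hc1, hcase,
            rk_lt_m (by omega) (by omega) hc1 hcase, by rw [hI, Nat.add_sub_cancel]⟩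
        · -- cc' = n-k+1 : cointerval
          refine Or.inl (Or.inl (Or.inr ⟨⟨hsub, p+1, p+cc', ?_⟩, ?_⟩))
          · rw [hI]
            ext x
            simp only [Finset.mem_sdiff, Finset.mem_Icc, mem_Kst]
            omega
          · rw [hI, card_Kst (by omega), Finset.mem_Icc]; omega
    · rw [Finset.mem_Icc] at hcard
      exact Or.inl (Or.inl (Or.inl ⟨hIv, Finset.mem_Icc.mpr ⟨by omega, hcard.2⟩⟩))
    · rw [Finset.mem_Icc] at hcard
      exact Or.inl (Or.inl (Or.inr ⟨hCo, Finset.mem_Icc.mpr ⟨hcard.1, by omega⟩⟩))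

/-! ### Assembly: the flip chain and flip equivalences -/

lemma main_chain {n r s k : ℕ} (hr : 1 ≤ r) (hrk : r ≤ k-1) (hk : 2 ≤ k) (hks : k ≤ s)
    (hsn : s ≤ n - 1) (hn : 2 ≤ n) :
    ∃ (m : ℕ) (C : ℕ → Set (Finset ℕ)),
      C 0 = SJrect n (Finset.Icc r s) k ∧
      C m = SJrect n (Finset.Icc r s) (k - 1) ∧
      (∀ t < m, LoweringFlip n (C t) (C (t + 1))) ∧
      (∀ t < m, RaisingFlip n (C (t + 1)) (C t)) ∧
      (∀ t ≤ m, WSColl (C t)) :=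
  ⟨(k-1)*(n-k), CC n r s k, CC0_eq hr hrk hk hks hsn hn, CCm_eq hr hrk hk hks hsn hn,
    fun t ht => (flip_step t hr hrk hk hks ht).1,
    fun t ht => (flip_step t hr hrk hk hks ht).2,
    fun t _ => wscoll_CC t hk⟩

lemma flipEquiv_refl {n : ℕ} {S : Set (Finset ℕ)} (h : WSColl S) : FlipEquiv n S S :=
  ⟨0, fun _ => S, rfl, rfl, fun t ht => absurd ht (by omega), fun _ _ => h⟩

lemma flipEquiv_trans {n : ℕ} {S1 S2 S3 : Set (Finset ℕ)}
    (h12 : FlipEquiv n S1 S2) (h23 : FlipEquiv n S2 S3) : FlipEquiv n S1 S3 := by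
  obtain ⟨m1, C1, h10, h1m, hs1, hw1⟩ := h12
  obtain ⟨m2, C2, h20, h2m, hs2, hw2⟩ := h23
  classical
  refine ⟨m1 + m2, fun u => if u < m1 then C1 u else C2 (u - m1), ?_, ?_, ?_, ?_⟩
  · dsimp only
    by_cases h : 0 < m1
    · rw [if_pos h]; exact h10
    · rw [if_neg h]
      have hm1 : m1 = 0 := by omega
      have hSS : C2 (0 - m1) = S1 := by
        rw [hm1, Nat.sub_zero, h20, ← h10, ← h1m, hm1]
      exact hSS
  · dsimp only
    rw [if_neg (by omega)]
    have he : m1 + m2 - m1 = m2 := by omega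
    rw [he]; exact h2m
  · intro u hu
    dsimp only
    rcases lt_trichotomy (u+1) m1 with h1 | h1 | h1
    · rw [if_pos (by omega : u < m1), if_pos h1]
      exact hs1 u (by omega)
    · rw [if_pos (by omega : u < m1), if_neg (by omega)]
      have he : u + 1 - m1 = 0 := by omega
      rw [he, h20, ← h1m, ← h1]
      exact hs1 u (by omega)
    · rw [if_neg (by omega), if_neg (by omega)]
      have he : u + 1 - m1 = (u - m1) + 1 := by omega
      rw [he]
      exact hs2 (u - m1) (by omega)
  · intro u hu
    dsimp only
    by_cases h : u < m1
    · rw [if_pos h]; exact hw1 u (by omega)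
    · rw [if_neg h]; exact hw2 (u - m1) (by omega)

lemma SJ_equiv_step {n r s k : ℕ} (hr : 1 ≤ r) (hrk : r ≤ k-1) (hk : 2 ≤ k) (hks : k ≤ s)
    (hsn : s ≤ n - 1) (hn : 2 ≤ n) :
    FlipEquiv n (SJrect n (Finset.Icc r s) k) (SJrect n (Finset.Icc r s) (k-1)) ∧
    FlipEquiv n (SJrect n (Finset.Icc r s) (k-1)) (SJrect n (Finset.Icc r s) k) := by
  obtain ⟨m, C, h0, hm, hlow, hrai, hws⟩ := main_chain hr hrk hk hks hsn hn
  constructor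
  · exact ⟨m, C, h0, hm, fun t ht => Or.inr (hlow t ht), hws⟩
  · refine ⟨m, fun u => C (m - u), by dsimp only; rw [Nat.sub_zero]; exact hm,
      by dsimp only; rw [Nat.sub_self]; exact h0, ?_, fun u hu => hws (m - u) (by omega)⟩
    intro u hu
    left
    have h2 : m - (u+1) + 1 = m - u := by omega
    have := hrai (m - (u+1)) (by omega)
    rwa [h2] at this

lemma wscoll_SJ {n r s l : ℕ} (hr : 1 ≤ r) (hrs : r < s) (hsn : s ≤ n - 1) (hn : 2 ≤ n)
    (hl1 : r ≤ l) (hl2 : l ≤ s) : WSColl (SJrect n (Finset.Icc r s) l) := by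
  rcases lt_or_eq_of_le hl2 with hls | hls
  · have heq := CCm_eq (n := n) (r := r) (s := s) (k := l+1) hr (by omega) (by omega)
      (by omega) hsn hn
    simp only [Nat.add_sub_cancel] at heq
    rw [← heq]
    exact wscoll_CC _ (by omega)
  · rw [hls]
    have heq := CC0_eq (n := n) (r := r) (s := s) (k := s) hr (by omega) (by omega)
      le_rfl hsn hn
    rw [← heq]
    exact wscoll_CC _ (by omega)

lemma SJ_updown {n r s : ℕ} (hr : 1 ≤ r) (hrs : r < s) (hsn : s ≤ n - 1) (hn : 2 ≤ n) :
    ∀ (d l : ℕ), r ≤ l → l + d ≤ s →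
      FlipEquiv n (SJrect n (Finset.Icc r s) (l+d)) (SJrect n (Finset.Icc r s) l) ∧
      FlipEquiv n (SJrect n (Finset.Icc r s) l) (SJrect n (Finset.Icc r s) (l+d)) := by
  intro d
  induction d with
  | zero =>
    intro l h1 h2
    have := wscoll_SJ hr hrs hsn hn h1 (by omega)
    exact ⟨flipEquiv_refl this, flipEquiv_refl this⟩
  | succ d ih =>
    intro l h1 h2
    obtain ⟨ih1, ih2⟩ := ih l h1 (by omega)
    have hstep := SJ_equiv_step (n := n) (r := r) (s := s) (k := l+d+1) hr
      (by omega) (by omega) (by omega) hsn hn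
    simp only [Nat.add_sub_cancel] at hstep
    have e : l + (d+1) = l + d + 1 := by omega
    rw [e]
    exact ⟨flipEquiv_trans hstep.1 ih1, flipEquiv_trans ih2 hstep.2⟩

/-- **Flip equivalence of extended rectangle collections.**
Let `J = [r,s] ⊆ {1,…,n−1}` be an interval and `k ∈ J` with `k−1 ∈ J`.  Then
`S_{J,k−1,□}` is obtained from `S_{J,k,□}` by a finite sequence of weak lowering flips,
each intermediate collection being weakly separated; consequently, all the collections
`S_{J,l,□}` with `l ∈ J` are pairwise flip equivalent. -/
theorem extended_rectangle_collections_flip_equivalent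
    (n : ℕ) (hn : 2 ≤ n) (r s k : ℕ)
    (hr : 1 ≤ r) (hrs : r ≤ s) (hs : s ≤ n - 1)
    (hk : k ∈ Finset.Icc r s) (hk1 : k - 1 ∈ Finset.Icc r s) :
    (∃ (m : ℕ) (C : ℕ → Set (Finset ℕ)),
      C 0 = SJrect n (Finset.Icc r s) k ∧
      C m = SJrect n (Finset.Icc r s) (k - 1) ∧
      (∀ t < m, LoweringFlip n (C t) (C (t + 1))) ∧
      (∀ t ≤ m, WSColl (C t))) ∧
    (∀ l l' : ℕ, l ∈ Finset.Icc r s → l' ∈ Finset.Icc r s →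
      FlipEquiv n (SJrect n (Finset.Icc r s) l) (SJrect n (Finset.Icc r s) l')) := by
  rw [Finset.mem_Icc] at hk hk1
  have hk2 : 2 ≤ k := by omega
  have hrk : r ≤ k - 1 := hk1.1
  have hks : k ≤ s := hk.2
  have hrs' : r < s := by omega
  constructor
  · obtain ⟨m, C, h0, hm, hlow, _, hws⟩ := main_chain hr hrk hk2 hks hs hn
    exact ⟨m, C, h0, hm, hlow, hws⟩
  · intro l l' hl hl'
    rw [Finset.mem_Icc] at hl hl'
    rcases le_total l l' with h | h
    · have hud := (SJ_updown hr hrs' hs hn (l' - l) l hl.1 (by omega)).2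
      have e : l + (l' - l) = l' := by omega
      rwa [e] at hud
    · have hud := (SJ_updown hr hrs' hs hn (l - l') l' hl'.1 (by omega)).1
      have e : l' + (l - l') = l := by omega
      rwa [e] at hud
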